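/- Let D ⊆ 2^V be a distributive lattice with ∅, V ∈ D, and H : D → ℝ submodular with Lovász extension h(x) = sup_{w ∈ B_D(H)} ⟨x, w⟩. If x ∈ ℝ^V satisfies h(x) < +∞, then for every α ∈ ℝ the superlevel set {v ∈ V : x(v) ≥ α} belongs to D. -/

import Mathlib

open scoped BigOperators

private lemma sup_mem_D {V : Type*} [Fintype V] [DecidableEq V]
    (D : Set (Finset V)) (hD0 : ∅ ∈ D)
    (hDu : ∀ S T, S ∈ D → T ∈ D → S ∪ T ∈ D)
    (s : Finset V) (f : V → Finset V) (hf : ∀ v ∈ s, f v ∈ D) :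
    s.sup f ∈ D := by
  induction s using Finset.induction_on with
  | empty => simpa using hD0
  | insert _ _ hnot ih =>
    rw [Finset.sup_insert]
    exact hDu _ _ (hf _ (Finset.mem_insert_self _ _))
      (ih fun v hv => hf v (Finset.mem_insert_of_mem hv))

private lemma inf_mem_D {V : Type*} [Fintype V] [DecidableEq V]
    (D : Set (Finset V)) (hDV : Finset.univ ∈ D)
    (hDi : ∀ S T, S ∈ D → T ∈ D → S ∩ T ∈ D)
    (s : Finset V) (f : V → Finset V) (hf : ∀ v ∈ s, f v ∈ D) :
    s.inf f ∈ D := by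
  induction s using Finset.induction_on with
  | empty => simpa [Finset.top_eq_univ] using hDV
  | insert _ _ hnot ih =>
    rw [Finset.inf_insert]
    exact hDi _ _ (hf _ (Finset.mem_insert_self _ _))
      (ih fun v hv => hf v (Finset.mem_insert_of_mem hv))

/-- If the Lovász extension value `h(x) = sup_{w ∈ B_D(H)} ⟨x,w⟩` is finite,
then every superlevel set `{x ≥ α}` belongs to the distributive lattice `D`. -/
theorem superlevel_mem_of_lovasz_finite {V : Type*} [Fintype V] [DecidableEq V]
    (D : Set (Finset V)) (hD0 : ∅ ∈ D) (hDV : Finset.univ ∈ D)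
    (hDu : ∀ S T, S ∈ D → T ∈ D → S ∪ T ∈ D)
    (hDi : ∀ S T, S ∈ D → T ∈ D → S ∩ T ∈ D)
    (H : Finset V → ℝ)
    (hsub : ∀ S T, S ∈ D → T ∈ D → H (S ∪ T) + H (S ∩ T) ≤ H S + H T)
    (hB : ∃ w : V → ℝ, (∀ S ∈ D, ∑ v ∈ S, w v ≤ H S) ∧ ∑ v, w v = H Finset.univ)
    (x : V → ℝ)
    (hfin : (⨆ w ∈ {w : V → ℝ |
        (∀ S ∈ D, ∑ v ∈ S, w v ≤ H S) ∧ ∑ v, w v = H Finset.univ},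
      ((∑ v, x v * w v : ℝ) : EReal)) < ⊤) :
    ∀ α : ℝ, (Finset.univ.filter fun v => α ≤ x v) ∈ D := by
  intro α
  set A : Finset V := Finset.univ.filter fun v => α ≤ x v with hA
  by_contra hAD
  -- Find a "bad pair": v ∈ A, u ∉ A such that every set in D containing v contains u.
  have hpair : ∃ v u, v ∈ A ∧ u ∉ A ∧ ∀ S ∈ D, v ∈ S → u ∈ S := by
    by_contra h
    push_neg at h
    -- separation: choose a set separating each v ∈ A from each u ∉ A
    have hsep : ∀ v u, ∃ S, S ∈ D ∧ (v ∈ A → u ∉ A → v ∈ S ∧ u ∉ S) := by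
      intro v u
      by_cases hv : v ∈ A
      · by_cases hu : u ∈ A
        · exact ⟨Finset.univ, hDV, fun _ hu' => absurd hu hu'⟩
        · obtain ⟨S, hSD, hvS, huS⟩ := h v u hv hu
          exact ⟨S, hSD, fun _ _ => ⟨hvS, huS⟩⟩
      · exact ⟨Finset.univ, hDV, fun hv' _ => absurd hv' hv⟩
    choose S hSD hSsep using hsep
    apply hAD
    have hT : ∀ v, (Finset.univ \ A).inf (S v) ∈ D :=
      fun v => inf_mem_D D hDV hDi _ _ fun u _ => hSD v u
    have hTsub : ∀ v ∈ A, (Finset.univ \ A).inf (S v) ⊆ A := by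
      intro v hv w hw
      by_contra hwA
      have hwmem : w ∈ Finset.univ \ A := Finset.mem_sdiff.2 ⟨Finset.mem_univ _, hwA⟩
      have := Finset.inf_le (f := S v) hwmem
      exact (hSsep v w hv hwA).2 (this hw)
    have hmemT : ∀ v ∈ A, v ∈ (Finset.univ \ A).inf (S v) := by
      intro v hv
      rw [Finset.mem_inf]
      intro u hu
      exact (hSsep v u hv (Finset.mem_sdiff.1 hu).2).1
    have : A = A.sup (fun v => (Finset.univ \ A).inf (S v)) := by
      apply Finset.Subset.antisymm
      · intro v hv
        exact Finset.le_iff_subset.mp (Finset.le_sup (f := fun v => (Finset.univ \ A).inf (S v)) hv) (hmemT v hv)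
      · exact Finset.sup_le fun v hv => hTsub v hv
    rw [this]
    exact sup_mem_D D hD0 hDu _ _ fun v _ => hT v
  obtain ⟨v, u, hvA, huA, hclose⟩ := hpair
  have hxv : α ≤ x v := (Finset.mem_filter.1 hvA).2
  have hxu : x u < α := by
    by_contra h
    exact huA (Finset.mem_filter.2 ⟨Finset.mem_univ _, not_lt.1 h⟩)
  have hε : 0 < x v - x u := by linarith
  obtain ⟨w₀, hw₀D, hw₀V⟩ := hB
  -- the perturbed vectors
  set wt : ℝ → V → ℝ := fun t z =>
    w₀ z + t * (if z = v then 1 else 0) - t * (if z = u then 1 else 0) with hwt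
  have hmem : ∀ t : ℝ, 0 ≤ t → wt t ∈ {w : V → ℝ |
      (∀ S ∈ D, ∑ v ∈ S, w v ≤ H S) ∧ ∑ v, w v = H Finset.univ} := by
    intro t ht
    constructor
    · intro T hT
      have hsum : ∑ z ∈ T, wt t z = (∑ z ∈ T, w₀ z)
          + t * (if v ∈ T then 1 else 0) - t * (if u ∈ T then 1 else 0) := by
        simp [hwt, Finset.sum_add_distrib, Finset.sum_sub_distrib,
          ← Finset.mul_sum, Finset.sum_ite_eq' T v (fun _ => (1:ℝ)),
          Finset.sum_ite_eq' T u (fun _ => (1:ℝ))]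
      rw [hsum]
      by_cases hvT : v ∈ T
      · have huT : u ∈ T := hclose T hT hvT
        simp only [hvT, huT, if_true]
        have := hw₀D T hT
        linarith
      · simp only [hvT, if_false]
        have := hw₀D T hT
        by_cases huT : u ∈ T <;> simp [huT] <;> nlinarith
    · have hsum : ∑ z, wt t z = (∑ z, w₀ z) + t * 1 - t * 1 := by
        simp [hwt, Finset.sum_add_distrib, Finset.sum_sub_distrib,
          ← Finset.mul_sum, Finset.sum_ite_eq' Finset.univ v (fun _ => (1:ℝ)),
          Finset.sum_ite_eq' Finset.univ u (fun _ => (1:ℝ))]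
      rw [hsum, hw₀V]; ring
  have hinner : ∀ t : ℝ, ∑ z, x z * wt t z = (∑ z, x z * w₀ z) + t * (x v - x u) := by
    intro t
    have : ∀ z, x z * wt t z = x z * w₀ z
        + t * (x z * (if z = v then 1 else 0)) - t * (x z * (if z = u then 1 else 0)) := by
      intro z; simp only [hwt]; by_cases h1 : z = v <;> by_cases h2 : z = u <;> simp [h1, h2, mul_ite, mul_zero] <;> split_ifs <;> ring
    simp only [this, Finset.sum_sub_distrib, Finset.sum_add_distrib, ← Finset.mul_sum]
    have h1 : ∑ z, x z * (if z = v then (1:ℝ) else 0) = x v := by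
      simp [mul_ite, Finset.sum_ite_eq' Finset.univ v]
    have h2 : ∑ z, x z * (if z = u then (1:ℝ) else 0) = x u := by
      simp [mul_ite, Finset.sum_ite_eq' Finset.univ u]
    rw [h1, h2]; ring
  -- finiteness gives a real upper bound
  set Sup := (⨆ w ∈ {w : V → ℝ |
        (∀ S ∈ D, ∑ v ∈ S, w v ≤ H S) ∧ ∑ v, w v = H Finset.univ},
      ((∑ v, x v * w v : ℝ) : EReal)) with hSup
  have hne : Sup ≠ ⊤ := ne_of_lt hfin
  have hle : ∀ t : ℝ, 0 ≤ t →
      (((∑ z, x z * w₀ z) + t * (x v - x u) : ℝ) : EReal) ≤ Sup := by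
    intro t ht
    have := le_iSup₂ (f := fun (w : V → ℝ) (_ : w ∈ {w : V → ℝ |
        (∀ S ∈ D, ∑ v ∈ S, w v ≤ H S) ∧ ∑ v, w v = H Finset.univ}) =>
        ((∑ v, x v * w v : ℝ) : EReal)) (wt t) (hmem t ht)
    rw [hinner t] at this
    exact this
  have hle' : ∀ t : ℝ, 0 ≤ t →
      (∑ z, x z * w₀ z) + t * (x v - x u) ≤ Sup.toReal := by
    intro t ht
    have h1 := (hle t ht).trans (EReal.le_coe_toReal hne)
    exact_mod_cast h1
  set c := ∑ z, x z * w₀ z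
  set r := Sup.toReal
  set t := max 0 ((r - c) / (x v - x u) + 1) with htdef
  have ht0 : 0 ≤ t := le_max_left _ _
  have ht1 : (r - c) / (x v - x u) + 1 ≤ t := le_max_right _ _
  have h1 := hle' t ht0
  have h2 : (r - c) / (x v - x u) * (x v - x u) = r - c := by
    field_simp
  nlinarith [mul_le_mul_of_nonneg_right ht1 (le_of_lt hε)]
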